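/- Let K, H be complex Hilbert spaces, Γ_j ∈ B(K,H) (j ≥ 0), and let Hk : ℓ²_K(−ℕ₀) → ℓ²_H(ℕ₀) be a bounded operator with matrix entries (Hk)_{i,j} = Γ_{i−j} and ‖Hk‖ < 1. Let (B, D, Δ) solve the first Yule–Walker system: B : K → ℓ²_H(ℕ₀), D : K → ℓ²_K(−ℕ₀) with components D_j ∈ B(K), D_0 = I, B + Hk∘D = 0, Hk*∘B + D = Δ with Δ supported at index 0. Let (A, C, α) solve the second Yule–Walker system: A : H → ℓ²_H(ℕ₀) with components A_k ∈ B(H), A_0 = I, C : H → ℓ²_K(−ℕ₀), A + Hk∘C = α with α supported at index 0, and Hk*∘A + C = 0. Define sequences (Γ_j)_{j≤−1} and (Γ'_j)_{j≤−1} in B(K,H) by the recursions Γ_j x = −Σ_{k=1}^∞ Γ_{j+k}(D_{−k} x) and (Γ'_j)* y = −Σ_{k=1}^∞ (Γ'_{j+k})*(A_k y), where Γ_j = Γ'_j for j ≥ 0 are the given data (assume each series converges pointwise and defines a bounded operator). Then Γ_j = Γ'_j for all j ≤ −1: the two constructions produce the same sequence of operators. -/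

import Mathlib

/- STATEMENT 12: the two constructions of the negatively indexed Fourier coefficients in the
   one-variable operator valued Nehari theorem — via the Yule–Walker solution (B, D, Δ) and
   via the Yule–Walker solution (A, C, α) — produce the same sequence of operators.
   Column indices j ∈ -ℕ₀ are encoded by j ∈ ℕ, so the Hankel entry (Hk)_{i,j} is Γ_{i+j}. -/

noncomputable section

open ContinuousLinearMap

variable {K H : Type*}
  [NormedAddCommGroup K] [InnerProductSpace ℂ K] [CompleteSpace K]
  [NormedAddCommGroup H] [InnerProductSpace ℂ H] [CompleteSpace H]

open scoped ENNReal

namespace NehariAux12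

local notation "⟪" x ", " y "⟫" => @inner ℂ _ _ x y

variable {E F : Type*}
  [NormedAddCommGroup E] [InnerProductSpace ℂ E] [CompleteSpace E]
  [NormedAddCommGroup F] [InnerProductSpace ℂ F] [CompleteSpace F]

lemma two_toReal : ((2:ℝ≥0∞)).toReal = 2 := by norm_num

/-- evaluation at a coordinate as a CLM -/
def evalCLM (i : ℕ) : lp (fun _ : ℕ => E) 2 →L[ℂ] E :=
  LinearMap.mkContinuous
    { toFun := fun f => f i
      map_add' := fun f g => by simp only [lp.coeFn_add, Pi.add_apply]
      map_smul' := fun c f => by simp only [lp.coeFn_smul, Pi.smul_apply, RingHom.id_apply] } 1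
    (fun f => by
      rw [one_mul]; exact lp.norm_apply_le_norm (by norm_num) f i)

@[simp] lemma evalCLM_apply (i : ℕ) (f : lp (fun _ : ℕ => E) 2) :
    (evalCLM i) f = f i := rfl

lemma single_add (i : ℕ) (x y : E) :
    lp.single (E := fun _ : ℕ => E) 2 i (x + y) = lp.single 2 i x + lp.single 2 i y := by
  apply lp.ext
  ext j
  rw [lp.coeFn_add, Pi.add_apply]
  rcases eq_or_ne j i with rfl | hj
  · simp [lp.single_apply_self]
  · simp [lp.single_apply_ne _ _ _ hj]

/-- `lp.single` as a CLM -/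
def singleCLM (i : ℕ) : E →L[ℂ] lp (fun _ : ℕ => E) 2 :=
  LinearMap.mkContinuous
    { toFun := fun x => lp.single 2 i x
      map_add' := fun x y => single_add i x y
      map_smul' := fun c x => by simpa using (lp.single_smul 2 i x c) } 1
    (fun x => by
      simpa using le_of_eq (lp.norm_single (p := 2) (by norm_num) (fun _ => x) i))

@[simp] lemma singleCLM_apply (i : ℕ) (x : E) :
    (singleCLM i) x = lp.single 2 i x := rfl

end NehariAux12

namespace NehariAux12

set_option linter.unusedSectionVars false

variable {E F : Type*}
  [NormedAddCommGroup E] [InnerProductSpace ℂ E] [CompleteSpace E]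
  [NormedAddCommGroup F] [InnerProductSpace ℂ F] [CompleteSpace F]

local notation "l2" E => lp (fun _ : ℕ => E) 2

lemma summable_norm_sq (f : l2 E) : Summable fun i => ‖f i‖ ^ (2:ℝ≥0∞).toReal :=
  (lp.hasSum_norm (by norm_num) f).summable

/-- backward shift by N -/
def shiftRfun (N : ℕ) (f : ℕ → E) : ℕ → E := fun i => f (i + N)

/-- forward shift by N -/
def shiftLfun (N : ℕ) (f : ℕ → E) : ℕ → E := fun i => if h : N ≤ i then f (i - N) else 0

lemma memℓp_shiftR (N : ℕ) (f : l2 E) : Memℓp (shiftRfun N f) 2 :=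
  memℓp_gen <| (summable_norm_sq f).comp_injective (add_left_injective N)

lemma hasSum_norm_shiftL (N : ℕ) (f : l2 E) :
    HasSum (fun i => ‖shiftLfun N (⇑f) i‖ ^ (2:ℝ≥0∞).toReal) (‖f‖ ^ (2:ℝ≥0∞).toReal) := by
  have hinj : Function.Injective (fun k : ℕ => k + N) := add_left_injective N
  have hzero : ∀ i ∉ Set.range (fun k : ℕ => k + N),
      ‖shiftLfun N (⇑f) i‖ ^ (2:ℝ≥0∞).toReal = 0 := by
    intro i hi
    have : ¬ N ≤ i := by
      intro hNi
      exact hi ⟨i - N, by simpa using Nat.sub_add_cancel hNi⟩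
    simp [shiftLfun, this, Real.zero_rpow (by norm_num : (2:ℝ≥0∞).toReal ≠ 0)]
  refine (hinj.hasSum_iff hzero).mp ?_
  have : (fun k : ℕ => ‖shiftLfun N (⇑f) (k + N)‖ ^ (2:ℝ≥0∞).toReal)
      = fun k => ‖f k‖ ^ (2:ℝ≥0∞).toReal := by
    funext k
    simp [shiftLfun, Nat.le_add_left]
  show HasSum ((fun i => ‖shiftLfun N (⇑f) i‖ ^ (2:ℝ≥0∞).toReal) ∘ fun k => k + N) _
  simp only [Function.comp_def]
  rw [this]
  exact lp.hasSum_norm (by norm_num) f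

lemma memℓp_shiftL (N : ℕ) (f : l2 E) : Memℓp (shiftLfun N (⇑f)) 2 :=
  memℓp_gen (hasSum_norm_shiftL N f).summable

/-- backward shift as CLM -/
def shiftR (N : ℕ) : (l2 E) →L[ℂ] (l2 E) :=
  LinearMap.mkContinuous
    { toFun := fun f => ⟨shiftRfun N (⇑f), memℓp_shiftR N f⟩
      map_add' := fun f g => by
        apply lp.ext; funext i
        simp only [lp.coeFn_add, Pi.add_apply]
        rfl
      map_smul' := fun c f => by
        apply lp.ext; funext i
        simp only [lp.coeFn_smul, Pi.smul_apply, RingHom.id_apply]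
        rfl } 1
    (fun f => by
      rw [one_mul]
      have h2 : (0:ℝ) < (2:ℝ≥0∞).toReal := by norm_num
      refine le_of_pow_le_pow_left₀ (n := 2) (by norm_num) (norm_nonneg _) ?_
      have hle : (∑' i, ‖shiftRfun N (⇑f) i‖ ^ (2:ℝ≥0∞).toReal) ≤
          ∑' i, ‖f i‖ ^ (2:ℝ≥0∞).toReal := by
        exact Summable.tsum_le_tsum_of_inj (fun k => k + N) (add_left_injective N)
          (fun i _ => Real.rpow_nonneg (norm_nonneg _) _)
          (fun k => le_of_eq rfl)
          (hf := (summable_norm_sq f).comp_injective (add_left_injective N))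
          (summable_norm_sq f)
      calc ‖(⟨shiftRfun N (⇑f), memℓp_shiftR N f⟩ : l2 E)‖ ^ (2:ℕ)
          = ‖(⟨shiftRfun N (⇑f), memℓp_shiftR N f⟩ : l2 E)‖ ^ ((2:ℝ≥0∞).toReal) := by
            rw [two_toReal]; norm_num [Real.rpow_natCast]
        _ = ∑' i, ‖shiftRfun N (⇑f) i‖ ^ (2:ℝ≥0∞).toReal := by
            exact lp.norm_rpow_eq_tsum (by norm_num) _
        _ ≤ ∑' i, ‖f i‖ ^ (2:ℝ≥0∞).toReal := hle
        _ = ‖f‖ ^ ((2:ℝ≥0∞).toReal) := (lp.norm_rpow_eq_tsum (by norm_num) f).symm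
        _ = ‖f‖ ^ (2:ℕ) := by rw [two_toReal]; norm_num [Real.rpow_natCast])

@[simp] lemma shiftR_apply (N : ℕ) (f : l2 E) (i : ℕ) :
    ((shiftR N f : l2 E) : ℕ → E) i = f (i + N) := rfl

/-- forward shift as CLM -/
def shiftL (N : ℕ) : (l2 E) →L[ℂ] (l2 E) :=
  LinearMap.mkContinuous
    { toFun := fun f => ⟨shiftLfun N (⇑f), memℓp_shiftL N f⟩
      map_add' := fun f g => by
        apply lp.ext; funext i
        simp only [lp.coeFn_add, Pi.add_apply]
        show shiftLfun N (⇑(f+g)) i = shiftLfun N (⇑f) i + shiftLfun N (⇑g) i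
        simp only [shiftLfun, lp.coeFn_add, Pi.add_apply]
        split <;> simp
      map_smul' := fun c f => by
        apply lp.ext; funext i
        simp only [lp.coeFn_smul, Pi.smul_apply, RingHom.id_apply]
        show shiftLfun N (⇑(c • f)) i = c • shiftLfun N (⇑f) i
        simp only [shiftLfun, lp.coeFn_smul, Pi.smul_apply]
        split <;> simp } 1
    (fun f => by
      rw [one_mul]
      apply le_of_eq
      refine Real.rpow_left_injOn (x := (2:ℝ≥0∞).toReal) (by norm_num)
        (Set.mem_setOf.mpr (norm_nonneg _)) (Set.mem_setOf.mpr (norm_nonneg _)) ?_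
      calc ‖(⟨shiftLfun N (⇑f), memℓp_shiftL N f⟩ : l2 E)‖ ^ ((2:ℝ≥0∞).toReal)
          = ∑' i, ‖shiftLfun N (⇑f) i‖ ^ (2:ℝ≥0∞).toReal :=
            lp.norm_rpow_eq_tsum (by norm_num) _
        _ = ‖f‖ ^ ((2:ℝ≥0∞).toReal) := (hasSum_norm_shiftL N f).tsum_eq)

lemma shiftL_apply (N : ℕ) (f : l2 E) (i : ℕ) :
    ((shiftL N f : l2 E) : ℕ → E) i = if N ≤ i then f (i - N) else 0 := by
  show shiftLfun N (⇑f) i = _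
  simp [shiftLfun]

@[simp] lemma shiftL_apply_add (N : ℕ) (f : l2 E) (k : ℕ) :
    ((shiftL N f : l2 E) : ℕ → E) (k + N) = f k := by
  rw [shiftL_apply]
  simp

lemma shiftL_apply_of_lt (N : ℕ) (f : l2 E) {i : ℕ} (h : i < N) :
    ((shiftL N f : l2 E) : ℕ → E) i = 0 := by
  rw [shiftL_apply, if_neg (by omega)]

end NehariAux12

namespace NehariAux12

set_option linter.unusedSectionVars false

section Helpers

local notation "⟪" x ", " y "⟫" => @inner ℂ _ _ x y
local notation "l2" E => lp (fun _ : ℕ => E) 2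

variable {E F G : Type*}
  [NormedAddCommGroup E] [InnerProductSpace ℂ E] [CompleteSpace E]
  [NormedAddCommGroup F] [InnerProductSpace ℂ F] [CompleteSpace F]
  [NormedAddCommGroup G] [InnerProductSpace ℂ G] [CompleteSpace G]

lemma inner_shiftR_left (N : ℕ) (u : l2 E) (v : l2 E) :
    ⟪(shiftR N u : l2 E), v⟫ = ⟪u, (shiftL N v : l2 E)⟫ := by
  have h1 : HasSum (fun k => ⟪u (k + N), v k⟫) ⟪(shiftR N u : l2 E), v⟫ := by
    have := lp.hasSum_inner (𝕜 := ℂ) (shiftR N u) v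
    simpa [shiftR_apply] using this
  have h2 : HasSum (fun i => ⟪u i, ((shiftL N v : l2 E) : ℕ → E) i⟫)
      ⟪u, (shiftL N v : l2 E)⟫ := lp.hasSum_inner (𝕜 := ℂ) u (shiftL N v)
  have hinj : Function.Injective (fun k : ℕ => k + N) := add_left_injective N
  have hzero : ∀ i ∉ Set.range (fun k : ℕ => k + N),
      ⟪u i, ((shiftL N v : l2 E) : ℕ → E) i⟫ = 0 := by
    intro i hi
    have hlt : i < N := by
      by_contra hNi
      exact hi ⟨i - N, by simpa using Nat.sub_add_cancel (by omega)⟩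
    rw [shiftL_apply_of_lt N v hlt, inner_zero_right]
  have h3 := (hinj.hasSum_iff hzero).mpr h2
  have h4 : ((fun i => ⟪u i, ((shiftL N v : l2 E) : ℕ → E) i⟫) ∘ fun k => k + N)
      = fun k => ⟪u (k + N), v k⟫ := by
    funext k
    simp [Function.comp]
  rw [h4] at h3
  exact h1.unique h3

lemma shiftL_single (N i : ℕ) (y : E) :
    (shiftL N (lp.single 2 i y) : l2 E) = lp.single 2 (i + N) y := by
  apply lp.ext; funext j
  rcases lt_or_ge j N with hj | hj
  · rw [shiftL_apply_of_lt N _ hj, lp.single_apply_ne _ _ _ (by omega)]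
  · rw [shiftL_apply, if_pos hj]
    rcases eq_or_ne j (i + N) with rfl | hne
    · rw [lp.single_apply_self]
      have : i + N - N = i := by omega
      rw [this, lp.single_apply_self]
    · rw [lp.single_apply_ne _ _ _ hne, lp.single_apply_ne _ _ _ (by omega)]

lemma clm_eq_of_eq_on_single {T U : (l2 E) →L[ℂ] G}
    (h : ∀ (i : ℕ) (x : E), T (lp.single 2 i x) = U (lp.single 2 i x)) : T = U := by
  ext f
  have hf := lp.hasSum_single (E := fun _ : ℕ => E) (p := 2) (by norm_num) f
  have h1 : HasSum (fun i => T (lp.single 2 i (f i))) (T f) := hf.mapL T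
  have h2 : HasSum (fun i => T (lp.single 2 i (f i))) (U f) := by
    have := hf.mapL U
    refine HasSum.congr_fun this fun i => ?_
    exact h i (f i)
  exact h1.unique h2

end Helpers

end NehariAux12

namespace NehariAux12

set_option linter.unusedSectionVars false

section Hank

local notation "l2" E => lp (fun _ : ℕ => E) 2

variable {E F : Type*}
  [NormedAddCommGroup E] [InnerProductSpace ℂ E] [CompleteSpace E]
  [NormedAddCommGroup F] [InnerProductSpace ℂ F] [CompleteSpace F]

lemma shiftR_single_of_le {q k : ℕ} (h : q ≤ k) (x : E) :
    (shiftR q (lp.single 2 k x) : l2 E) = lp.single 2 (k - q) x := by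
  apply lp.ext; funext j
  rw [shiftR_apply]
  rcases eq_or_ne j (k - q) with rfl | hne
  · rw [lp.single_apply_self]
    have : k - q + q = k := by omega
    rw [this, lp.single_apply_self]
  · rw [lp.single_apply_ne _ _ _ hne, lp.single_apply_ne _ _ _ (by omega)]

lemma shiftR_single_of_lt {q k : ℕ} (h : k < q) (x : E) :
    (shiftR q (lp.single 2 k x) : l2 E) = 0 := by
  apply lp.ext; funext j
  rw [shiftR_apply, lp.single_apply_ne _ _ _ (by omega)]
  rw [lp.coeFn_zero]
  rfl

/-- row functional of the extended Hankel operator -/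
def rowOp (Hkop : (l2 E) →L[ℂ] (l2 F)) (Φ : ℤ → (E →L[ℂ] F)) (q : ℕ) :
    (l2 E) →L[ℂ] F :=
  (evalCLM 0) ∘L Hkop ∘L (shiftR q) +
    ∑ k ∈ Finset.range q, (Φ ((k : ℤ) - q)) ∘L (evalCLM k)

lemma rowOp_single (Hkop : (l2 E) →L[ℂ] (l2 F)) (Φ : ℤ → (E →L[ℂ] F))
    (hent : ∀ (i j : ℕ) (x : E), ((Hkop (lp.single 2 j x) : l2 F) : ℕ → F) i = Φ ((i : ℤ) + j) x)
    (q k : ℕ) (x : E) :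
    rowOp Hkop Φ q (lp.single 2 k x) = Φ ((k : ℤ) - q) x := by
  rw [rowOp, ContinuousLinearMap.add_apply, ContinuousLinearMap.sum_apply]
  rcases le_or_gt q k with h | h
  · have h1 : (evalCLM 0 ∘L Hkop ∘L shiftR q) (lp.single 2 k x) = Φ ((k : ℤ) - q) x := by
      rw [ContinuousLinearMap.comp_apply, ContinuousLinearMap.comp_apply,
        shiftR_single_of_le h]
      rw [show (evalCLM 0) (Hkop (lp.single 2 (k - q) x)) =
        ((Hkop (lp.single 2 (k-q) x) : l2 F) : ℕ → F) 0 from rfl, hent]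
      congr 1
      push_cast [Nat.cast_sub h]
      ring
    have h2 : ∑ k' ∈ Finset.range q,
        ((Φ ((k' : ℤ) - q)) ∘L (evalCLM k')) (lp.single 2 k x) = 0 := by
      refine Finset.sum_eq_zero fun k' hk' => ?_
      rw [ContinuousLinearMap.comp_apply, evalCLM_apply,
        lp.single_apply_ne _ _ _ (by simp at hk'; omega), map_zero]
    rw [h1, h2, add_zero]
  · have h1 : (evalCLM 0 ∘L Hkop ∘L shiftR q) (lp.single 2 k x) = 0 := by
      rw [ContinuousLinearMap.comp_apply, ContinuousLinearMap.comp_apply,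
        shiftR_single_of_lt h, map_zero, map_zero]
    have h2 : ∑ k' ∈ Finset.range q,
        ((Φ ((k' : ℤ) - q)) ∘L (evalCLM k')) (lp.single 2 k x) = Φ ((k : ℤ) - q) x := by
      rw [Finset.sum_eq_single k]
      · rw [ContinuousLinearMap.comp_apply, evalCLM_apply, lp.single_apply_self]
      · intro k' _ hne
        rw [ContinuousLinearMap.comp_apply, evalCLM_apply,
          lp.single_apply_ne _ _ _ hne, map_zero]
      · intro hk
        simp at hk
        omega
    rw [h1, h2, zero_add]

/-- the extended Hankel operator with entries `Φ (i + k - N)` -/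
def hankE (Hkop : (l2 E) →L[ℂ] (l2 F)) (Φ : ℤ → (E →L[ℂ] F)) (N : ℕ) :
    (l2 E) →L[ℂ] (l2 F) :=
  (shiftL N) ∘L Hkop +
    ∑ i ∈ Finset.range N, (singleCLM i) ∘L rowOp Hkop Φ (N - i)

lemma hankE_single (Hkop : (l2 E) →L[ℂ] (l2 F)) (Φ : ℤ → (E →L[ℂ] F)) (N : ℕ)
    (hent : ∀ (i j : ℕ) (x : E), ((Hkop (lp.single 2 j x) : l2 F) : ℕ → F) i = Φ ((i : ℤ) + j) x)
    (i k : ℕ) (x : E) :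
    ((hankE Hkop Φ N (lp.single 2 k x) : l2 F) : ℕ → F) i = Φ ((i : ℤ) + k - N) x := by
  rw [hankE, ContinuousLinearMap.add_apply, lp.coeFn_add, Pi.add_apply,
    ContinuousLinearMap.sum_apply, lp.coeFn_sum, Finset.sum_apply]
  rcases le_or_gt N i with h | h
  · have h1 : (((shiftL N ∘L Hkop) (lp.single 2 k x) : l2 F) : ℕ → F) i
        = Φ ((i : ℤ) + k - N) x := by
      rw [ContinuousLinearMap.comp_apply, shiftL_apply, if_pos h, hent]
      congr 1
      push_cast [Nat.cast_sub h]
      ring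
    have h2 : ∑ i' ∈ Finset.range N,
        (((singleCLM i' ∘L rowOp Hkop Φ (N - i')) (lp.single 2 k x) : l2 F) : ℕ → F) i = 0 := by
      refine Finset.sum_eq_zero fun i' hi' => ?_
      rw [ContinuousLinearMap.comp_apply, singleCLM_apply,
        lp.single_apply_ne _ _ _ (by simp at hi'; omega)]
    rw [h1, h2, add_zero]
  · have h1 : (((shiftL N ∘L Hkop) (lp.single 2 k x) : l2 F) : ℕ → F) i = 0 := by
      rw [ContinuousLinearMap.comp_apply, shiftL_apply, if_neg (by omega)]
    have h2 : ∑ i' ∈ Finset.range N,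
        (((singleCLM i' ∘L rowOp Hkop Φ (N - i')) (lp.single 2 k x) : l2 F) : ℕ → F) i
        = Φ ((i : ℤ) + k - N) x := by
      rw [Finset.sum_eq_single i]
      · rw [ContinuousLinearMap.comp_apply, singleCLM_apply, lp.single_apply_self,
          rowOp_single Hkop Φ hent]
        congr 1
        push_cast [Nat.cast_sub h.le]
        ring
      · intro i' _ hne
        rw [ContinuousLinearMap.comp_apply, singleCLM_apply,
          lp.single_apply_ne _ _ _ (Ne.symm hne)]
      · intro hi
        simp at hi
        omega
    rw [h1, h2, zero_add]

end Hank

end NehariAux12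

open NehariAux12

local notation "⟪" x ", " y "⟫" => @inner ℂ _ _ x y

set_option maxHeartbeats 4000000 in
theorem one_variable_nehari_two_constructions_agree
    (Γ : ℕ → (K →L[ℂ] H))
    (Hk : lp (fun _ : ℕ => K) 2 →L[ℂ] lp (fun _ : ℕ => H) 2)
    (hHknorm : ‖Hk‖ < 1)
    (hHkent : ∀ (i j : ℕ) (x : K), (Hk (lp.single 2 j x) : (ℕ → H)) i = Γ (i + j) x)
    -- first Yule–Walker system: (B, D, Δ), D has components Dc with Dc 0 = I
    (B : K →L[ℂ] lp (fun _ : ℕ => H) 2)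
    (D : K →L[ℂ] lp (fun _ : ℕ => K) 2)
    (Dc : ℕ → (K →L[ℂ] K))
    (hD : ∀ (x : K) (j : ℕ), (D x : (ℕ → K)) j = Dc j x)
    (hD0 : Dc 0 = ContinuousLinearMap.id ℂ K)
    (hYW1 : B + Hk ∘L D = 0)
    (hYW2 : ∀ (x : K) (j : ℕ), j ≠ 0 →
      (((ContinuousLinearMap.adjoint Hk) ∘L B + D) x : (ℕ → K)) j = 0)
    -- second Yule–Walker system: (A, C, α), A has components Ac with Ac 0 = I
    (A : H →L[ℂ] lp (fun _ : ℕ => H) 2)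
    (C : H →L[ℂ] lp (fun _ : ℕ => K) 2)
    (Ac : ℕ → (H →L[ℂ] H))
    (hA : ∀ (y : H) (i : ℕ), (A y : (ℕ → H)) i = Ac i y)
    (hA0 : Ac 0 = ContinuousLinearMap.id ℂ H)
    (hYW3 : ∀ (y : H) (i : ℕ), i ≠ 0 → ((A + Hk ∘L C) y : (ℕ → H)) i = 0)
    (hYW4 : (ContinuousLinearMap.adjoint Hk) ∘L A + C = 0)
    -- the two recursively defined extensions (each series assumed pointwise convergent)
    (Γe Γe' : ℤ → (K →L[ℂ] H))
    (hpos : ∀ i : ℕ, Γe (i : ℤ) = Γ i)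
    (hpos' : ∀ i : ℕ, Γe' (i : ℤ) = Γ i)
    -- Γ_j x = -Σ_{k=1}^∞ Γ_{j+k} (D_{-k} x)
    (hrec : ∀ j : ℤ, j ≤ -1 → ∀ x : K,
      HasSum (fun t : ℕ => Γe (j + 1 + (t : ℤ)) (Dc (t + 1) x)) (-(Γe j x)))
    -- (Γ'_j)* y = -Σ_{k=1}^∞ (Γ'_{j+k})* (A_k y)
    (hrec' : ∀ j : ℤ, j ≤ -1 → ∀ y : H,
      HasSum (fun t : ℕ =>
        (ContinuousLinearMap.adjoint (Γe' (j + 1 + (t : ℤ)))) (Ac (t + 1) y))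
        (-((ContinuousLinearMap.adjoint (Γe' j)) y))) :
    ∀ j : ℤ, Γe j = Γe' j := by
  classical
  -- entries of the adjoint Hankel operator
  have hadj : ∀ (k i : ℕ) (y : H),
      ((ContinuousLinearMap.adjoint Hk) (lp.single 2 i y) : (ℕ → K)) k
        = (ContinuousLinearMap.adjoint (Γ (k + i))) y := by
    intro k i y
    refine ext_inner_left ℂ fun z => ?_
    rw [← lp.inner_single_left (𝕜 := ℂ) k z ((ContinuousLinearMap.adjoint Hk) (lp.single 2 i y)),
      ContinuousLinearMap.adjoint_inner_right,
      lp.inner_single_right (𝕜 := ℂ) i y (Hk (lp.single 2 k z)),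
      hHkent, ContinuousLinearMap.adjoint_inner_right, Nat.add_comm k i]
  -- entry hypotheses for the two extended Hankel operators
  have hentE : ∀ (i j : ℕ) (x : K),
      (Hk (lp.single 2 j x) : (ℕ → H)) i = Γe ((i : ℤ) + j) x := by
    intro i j x
    rw [hHkent]
    have hc : ((i + j : ℕ) : ℤ) = (i : ℤ) + j := by push_cast; ring
    rw [← hc, hpos]
  have hentJ : ∀ (i j : ℕ) (y : H),
      ((ContinuousLinearMap.adjoint Hk) (lp.single 2 j y) : (ℕ → K)) i
        = (fun m : ℤ => ContinuousLinearMap.adjoint (Γe' m)) ((i : ℤ) + j) y := by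
    intro i j y
    rw [hadj]
    have hc : ((i + j : ℕ) : ℤ) = (i : ℤ) + j := by push_cast; ring
    simp only [← hc, hpos']
  have key : ∀ N : ℕ, Γe (-(N : ℤ)) = Γe' (-(N : ℤ)) := by
    intro N
    induction N using Nat.strong_induction_on with
    | _ N IH =>
    rcases Nat.eq_zero_or_pos N with rfl | hNpos
    · simpa using (hpos 0).trans (hpos' 0).symm
    -- the inductive step
    have hIH : ∀ p : ℤ, -(N : ℤ) < p → Γe p = Γe' p := by
      intro p hp
      rcases le_or_gt 0 p with h0 | h0
      · obtain ⟨m, rfl⟩ := Int.eq_ofNat_of_zero_le h0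
        exact (hpos m).trans (hpos' m).symm
      · obtain ⟨m, rfl⟩ : ∃ m : ℕ, p = -(m : ℤ) := ⟨p.natAbs, by omega⟩
        exact IH m (by omega)
    set HE : lp (fun _ : ℕ => K) 2 →L[ℂ] lp (fun _ : ℕ => H) 2 := hankE Hk Γe N with hHE
    set JE : lp (fun _ : ℕ => H) 2 →L[ℂ] lp (fun _ : ℕ => K) 2 :=
      hankE (ContinuousLinearMap.adjoint Hk) (fun m : ℤ => ContinuousLinearMap.adjoint (Γe' m)) N
      with hJE
    have hDsum : ∀ x : K, HasSum (fun k : ℕ => lp.single 2 k (Dc k x)) (D x) := by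
      intro x
      have h := lp.hasSum_single (E := fun _ : ℕ => K) (p := 2) (by norm_num) (D x)
      simp only [hD] at h
      exact h
    have hAsum : ∀ y : H, HasSum (fun i : ℕ => lp.single 2 i (Ac i y)) (A y) := by
      intro y
      have h := lp.hasSum_single (E := fun _ : ℕ => H) (p := 2) (by norm_num) (A y)
      simp only [hA] at h
      exact h
    -- fact 1 : HE (D x) = - shiftL N (B x)
    have fact1 : ∀ x : K, HE (D x) = -(shiftL N (B x)) := by
      intro x
      apply lp.ext; funext i
      have hcomp : HasSum (fun k : ℕ => Γe ((i : ℤ) + k - N) (Dc k x))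
          ((HE (D x) : ℕ → H) i) := by
        have h := (hDsum x).mapL ((evalCLM i) ∘L HE)
        simp only [ContinuousLinearMap.comp_apply, evalCLM_apply] at h
        refine h.congr_fun fun k => ?_
        exact (hankE_single Hk Γe N hentE i k (Dc k x)).symm
      rcases lt_or_ge i N with h | h
      · have hj : ((i : ℤ) - N) ≤ -1 := by omega
        have h0 := hrec ((i : ℤ) - N) hj x
        have h0' : HasSum (fun t : ℕ =>
            (fun k : ℕ => Γe ((i : ℤ) + k - N) (Dc k x)) (t + 1))
            (-(Γe ((i : ℤ) - N) x)) := by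
          refine h0.congr_fun fun t => ?_
          have hc : (i : ℤ) - N + 1 + t = (i : ℤ) + ((t + 1 : ℕ) : ℤ) - N := by push_cast; ring
          rw [hc]
        have h1 := (hasSum_nat_add_iff
          (f := fun k : ℕ => Γe ((i : ℤ) + k - N) (Dc k x)) 1).mp h0'
        simp only [Finset.range_one, Finset.sum_singleton, Nat.cast_zero, add_zero, hD0,
          ContinuousLinearMap.id_apply, neg_add_cancel] at h1
        have hzero : (HE (D x) : ℕ → H) i = 0 := hcomp.unique h1
        rw [hzero, lp.coeFn_neg, Pi.neg_apply, shiftL_apply_of_lt N _ h, neg_zero]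
      · have h2 : HasSum (fun k : ℕ => Γe ((i : ℤ) + k - N) (Dc k x))
            ((Hk (D x) : ℕ → H) (i - N)) := by
          have hh := (hDsum x).mapL ((evalCLM (i - N)) ∘L Hk)
          simp only [ContinuousLinearMap.comp_apply, evalCLM_apply] at hh
          refine hh.congr_fun fun k => ?_
          rw [hHkent]
          have hc : ((i - N + k : ℕ) : ℤ) = (i : ℤ) + k - N := by omega
          rw [← hc, hpos]
        have h3 : (HE (D x) : ℕ → H) i = (Hk (D x) : ℕ → H) (i - N) := hcomp.unique h2
        have h4 : B x + Hk (D x) = 0 := by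
          have := ContinuousLinearMap.ext_iff.mp hYW1 x
          simpa using this
        have h5 : Hk (D x) = -(B x) := by
          rw [eq_neg_iff_add_eq_zero, add_comm]
          exact h4
        rw [h3, h5, lp.coeFn_neg, Pi.neg_apply, lp.coeFn_neg, Pi.neg_apply,
          shiftL_apply, if_pos h]
    -- fact 2 : JE (A y) = - shiftL N (C y)
    have fact2 : ∀ y : H, JE (A y) = -(shiftL N (C y)) := by
      intro y
      apply lp.ext; funext k
      have hcomp : HasSum
          (fun i : ℕ => (ContinuousLinearMap.adjoint (Γe' ((k : ℤ) + i - N))) (Ac i y))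
          ((JE (A y) : ℕ → K) k) := by
        have h := (hAsum y).mapL ((evalCLM k) ∘L JE)
        simp only [ContinuousLinearMap.comp_apply, evalCLM_apply] at h
        refine h.congr_fun fun i => ?_
        exact (hankE_single (ContinuousLinearMap.adjoint Hk)
          (fun m : ℤ => ContinuousLinearMap.adjoint (Γe' m)) N hentJ k i (Ac i y)).symm
      rcases lt_or_ge k N with h | h
      · have hj : ((k : ℤ) - N) ≤ -1 := by omega
        have h0 := hrec' ((k : ℤ) - N) hj y
        have h0' : HasSum (fun t : ℕ =>
            (fun i : ℕ => (ContinuousLinearMap.adjoint (Γe' ((k : ℤ) + i - N))) (Ac i y)) (t + 1))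
            (-((ContinuousLinearMap.adjoint (Γe' ((k : ℤ) - N))) y)) := by
          refine h0.congr_fun fun t => ?_
          have hc : (k : ℤ) - N + 1 + t = (k : ℤ) + ((t + 1 : ℕ) : ℤ) - N := by push_cast; ring
          rw [hc]
        have h1 := (hasSum_nat_add_iff
          (f := fun i : ℕ =>
            (ContinuousLinearMap.adjoint (Γe' ((k : ℤ) + i - N))) (Ac i y)) 1).mp h0'
        simp only [Finset.range_one, Finset.sum_singleton, Nat.cast_zero, add_zero, hA0,
          ContinuousLinearMap.id_apply, neg_add_cancel] at h1
        have hzero : (JE (A y) : ℕ → K) k = 0 := hcomp.unique h1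
        rw [hzero, lp.coeFn_neg, Pi.neg_apply, shiftL_apply_of_lt N _ h, neg_zero]
      · have h2 : HasSum
            (fun i : ℕ => (ContinuousLinearMap.adjoint (Γe' ((k : ℤ) + i - N))) (Ac i y))
            (((ContinuousLinearMap.adjoint Hk) (A y) : ℕ → K) (k - N)) := by
          have hh := (hAsum y).mapL ((evalCLM (k - N)) ∘L (ContinuousLinearMap.adjoint Hk))
          simp only [ContinuousLinearMap.comp_apply, evalCLM_apply] at hh
          refine hh.congr_fun fun i => ?_
          rw [hadj]
          have hc : ((k - N + i : ℕ) : ℤ) = (k : ℤ) + i - N := by omega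
          rw [← hc, hpos']
        have h3 : (JE (A y) : ℕ → K) k
            = ((ContinuousLinearMap.adjoint Hk) (A y) : ℕ → K) (k - N) := hcomp.unique h2
        have h4 : (ContinuousLinearMap.adjoint Hk) (A y) + C y = 0 := by
          have := ContinuousLinearMap.ext_iff.mp hYW4 y
          simpa using this
        have h5 : (ContinuousLinearMap.adjoint Hk) (A y) = -(C y) := by
          rw [eq_neg_iff_add_eq_zero]
          exact h4
        rw [h3, h5, lp.coeFn_neg, Pi.neg_apply, lp.coeFn_neg, Pi.neg_apply,
          shiftL_apply, if_pos h]
    -- fact 3 : the pairing identity relating HE and JE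
    have fact3 : ∀ (v : lp (fun _ : ℕ => K) 2) (w : lp (fun _ : ℕ => H) 2),
        ⟪HE v, w⟫ = ⟪v, JE w⟫ +
          (⟪Γe (-(N : ℤ)) ((v : ℕ → K) 0), (w : ℕ → H) 0⟫ -
           ⟪Γe' (-(N : ℤ)) ((v : ℕ → K) 0), (w : ℕ → H) 0⟫) := by
      intro v w
      set δ : ℂ := ⟪Γe (-(N : ℤ)) ((v : ℕ → K) 0), (w : ℕ → H) 0⟫ -
           ⟪Γe' (-(N : ℤ)) ((v : ℕ → K) 0), (w : ℕ → H) 0⟫ with hδ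
      have hvsum : HasSum (fun k : ℕ => lp.single 2 k ((v : ℕ → K) k)) v :=
        lp.hasSum_single (by norm_num) v
      have hwsum : HasSum (fun i : ℕ => lp.single 2 i ((w : ℕ → H) i)) w :=
        lp.hasSum_single (by norm_num) w
      -- expansion of the left side along columns
      have ha : HasSum (fun k : ℕ => ⟪HE (lp.single 2 k ((v : ℕ → K) k)), w⟫) ⟪HE v, w⟫ := by
        have h1 : HasSum (fun k : ℕ => ⟪w, HE (lp.single 2 k ((v : ℕ → K) k))⟫) ⟪w, HE v⟫ :=
          (hvsum.mapL HE).mapL (innerSL ℂ w)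
        have h2 := h1.map ((starRingEnd ℂ) : ℂ →+* ℂ).toAddMonoidHom continuous_star
        simp only [Function.comp_def, RingHom.toAddMonoidHom_eq_coe,
          AddMonoidHom.coe_coe, inner_conj_symm] at h2
        exact h2
      have hb : HasSum (fun k : ℕ => ⟪(v : ℕ → K) k, (JE w : ℕ → K) k⟫) ⟪v, JE w⟫ :=
        lp.hasSum_inner (𝕜 := ℂ) v (JE w)
      -- the per-column comparison
      have hkey : ∀ k : ℕ, ⟪HE (lp.single 2 k ((v : ℕ → K) k)), w⟫
          = ⟪(v : ℕ → K) k, (JE w : ℕ → K) k⟫ + (if k = 0 then δ else 0) := by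
        intro k
        have haK : HasSum (fun i : ℕ => ⟪Γe ((i : ℤ) + k - N) ((v : ℕ → K) k), (w : ℕ → H) i⟫)
            ⟪HE (lp.single 2 k ((v : ℕ → K) k)), w⟫ := by
          have h := lp.hasSum_inner (𝕜 := ℂ) (HE (lp.single 2 k ((v : ℕ → K) k))) w
          refine h.congr_fun fun i => ?_
          rw [hankE_single Hk Γe N hentE i k ((v : ℕ → K) k)]
        have hJk : HasSum
            (fun i : ℕ => (ContinuousLinearMap.adjoint (Γe' ((k : ℤ) + i - N))) ((w : ℕ → H) i))
            ((JE w : ℕ → K) k) := by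
          have h := hwsum.mapL ((evalCLM k) ∘L JE)
          simp only [ContinuousLinearMap.comp_apply, evalCLM_apply] at h
          refine h.congr_fun fun i => ?_
          exact (hankE_single (ContinuousLinearMap.adjoint Hk)
            (fun m : ℤ => ContinuousLinearMap.adjoint (Γe' m)) N hentJ k i ((w : ℕ → H) i)).symm
        have hbK : HasSum (fun i : ℕ => ⟪Γe' ((k : ℤ) + i - N) ((v : ℕ → K) k), (w : ℕ → H) i⟫)
            ⟪(v : ℕ → K) k, (JE w : ℕ → K) k⟫ := by
          have h := hJk.mapL (innerSL ℂ ((v : ℕ → K) k))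
          refine h.congr_fun fun i => ?_
          simp only [innerSL_apply_apply, ContinuousLinearMap.adjoint_inner_right]
        rcases Nat.eq_zero_or_pos k with rfl | hk
        · -- k = 0 : difference of the two sums is δ
          have hdiff := haK.sub hbK
          have hpt : ∀ i : ℕ,
              (⟪Γe ((i : ℤ) + ((0:ℕ):ℤ) - N) ((v : ℕ → K) 0), (w : ℕ → H) i⟫ -
               ⟪Γe' (((0:ℕ):ℤ) + (i:ℤ) - N) ((v : ℕ → K) 0), (w : ℕ → H) i⟫)
              = (if i = 0 then δ else 0) := by
            intro i
            rcases Nat.eq_zero_or_pos i with rfl | hi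
            · rw [if_pos rfl, hδ]
              norm_num
            · rw [if_neg (by omega)]
              have harg : ((0:ℕ):ℤ) + (i:ℤ) - N = (i : ℤ) + ((0:ℕ):ℤ) - N := by ring
              rw [harg, hIH ((i : ℤ) + ((0:ℕ):ℤ) - N) (by push_cast; omega)]
              exact sub_self _
          have hδsum : HasSum (fun i : ℕ =>
              ⟪Γe ((i : ℤ) + ((0:ℕ):ℤ) - N) ((v : ℕ → K) 0), (w : ℕ → H) i⟫ -
              ⟪Γe' (((0:ℕ):ℤ) + (i:ℤ) - N) ((v : ℕ → K) 0), (w : ℕ → H) i⟫) δ :=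
            (hasSum_ite_eq 0 δ).congr_fun hpt
          have hval := hdiff.unique hδsum
          rw [if_pos rfl]
          linear_combination hval
        · rw [if_neg (by omega), add_zero]
          refine haK.unique (hbK.congr_fun fun i => ?_)
          have harg : (k : ℤ) + i - N = (i : ℤ) + k - N := by ring
          rw [harg, hIH ((i : ℤ) + k - N) (by push_cast; omega)]
      have hb' : HasSum
          (fun k : ℕ => ⟪(v : ℕ → K) k, (JE w : ℕ → K) k⟫ + (if k = 0 then δ else 0))
          (⟪v, JE w⟫ + δ) := hb.add (hasSum_ite_eq 0 δ)
      exact ha.unique (hb'.congr_fun fun k => hkey k)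
    -- fact 4 : the crucial Yule–Walker identity
    have fact4 : ∀ (x : K) (y : H),
        ⟪(shiftL N (B x) : lp (fun _ : ℕ => H) 2), A y⟫
          = ⟪D x, (shiftL N (C y) : lp (fun _ : ℕ => K) 2)⟫ := by
      intro x y
      have hinter : ContinuousLinearMap.adjoint Hk ∘L (shiftL N)
          = (shiftR N) ∘L ContinuousLinearMap.adjoint Hk := by
        refine clm_eq_of_eq_on_single fun i z => ?_
        rw [ContinuousLinearMap.comp_apply, ContinuousLinearMap.comp_apply, shiftL_single]
        apply lp.ext; funext m
        rw [shiftR_apply, hadj, hadj, show m + (i + N) = m + N + i from by omega]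
      have h1 : ⟪(shiftL N (B x) : lp (fun _ : ℕ => H) 2), A y⟫ +
          ⟪(shiftL N (B x) : lp (fun _ : ℕ => H) 2), Hk (C y)⟫ = 0 := by
        rw [← inner_add_right]
        have hsum := lp.hasSum_inner (𝕜 := ℂ) (shiftL N (B x)) (A y + Hk (C y))
        have hzero : (fun i : ℕ =>
            ⟪((shiftL N (B x) : lp (fun _ : ℕ => H) 2) : ℕ → H) i,
              ((A y + Hk (C y) : lp (fun _ : ℕ => H) 2) : ℕ → H) i⟫)
            = fun _ => (0 : ℂ) := by
          funext i
          rcases Nat.eq_zero_or_pos i with rfl | hi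
          · rw [shiftL_apply_of_lt N _ hNpos, inner_zero_left]
          · have h0 := hYW3 y i (by omega)
            have hexp : ((A + Hk ∘L C) y : lp (fun _ : ℕ => H) 2) = A y + Hk (C y) := by
              simp
            rw [hexp] at h0
            rw [h0, inner_zero_right]
        rw [hzero] at hsum
        exact hsum.unique hasSum_zero
      have h2 : ⟪(shiftL N (B x) : lp (fun _ : ℕ => H) 2), Hk (C y)⟫
          = ⟪(shiftR N ((ContinuousLinearMap.adjoint Hk) (B x)) : lp (fun _ : ℕ => K) 2),
              C y⟫ := by
        rw [← ContinuousLinearMap.adjoint_inner_left Hk (C y) (shiftL N (B x))]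
        congr 1
        have h := ContinuousLinearMap.ext_iff.mp hinter (B x)
        simpa using h
      have h4 : ⟪(shiftR N ((ContinuousLinearMap.adjoint Hk) (B x)) : lp (fun _ : ℕ => K) 2), C y⟫
          = -⟪(shiftR N (D x) : lp (fun _ : ℕ => K) 2), C y⟫ := by
        have hs1 := lp.hasSum_inner (𝕜 := ℂ)
          (shiftR N ((ContinuousLinearMap.adjoint Hk) (B x))) (C y)
        have hs2 := (lp.hasSum_inner (𝕜 := ℂ) (shiftR N (D x)) (C y)).neg
        refine hs1.unique (hs2.congr_fun fun k => ?_)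
        rw [shiftR_apply, shiftR_apply]
        have h0 := hYW2 x (k + N) (by omega)
        have hexp : (((ContinuousLinearMap.adjoint Hk) ∘L B + D) x : lp (fun _ : ℕ => K) 2)
            = (ContinuousLinearMap.adjoint Hk) (B x) + D x := by simp
        rw [hexp, lp.coeFn_add, Pi.add_apply] at h0
        have h6 : ((ContinuousLinearMap.adjoint Hk) (B x) : ℕ → K) (k + N)
            = -((D x : ℕ → K) (k + N)) := by
          exact eq_neg_of_add_eq_zero_left h0
        rw [h6, inner_neg_left]
      have h5 := inner_shiftR_left N (D x) (C y)
      linear_combination h1 - h2 - h4 + h5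
    -- conclusion of the inductive step
    have hmain : ∀ (x : K) (y : H), ⟪Γe (-(N : ℤ)) x, y⟫ = ⟪Γe' (-(N : ℤ)) x, y⟫ := by
      intro x y
      have h3 := fact3 (D x) (A y)
      rw [fact1 x, fact2 y] at h3
      have hDx0 : (D x : ℕ → K) 0 = x := by rw [hD, hD0]; rfl
      have hAy0 : (A y : ℕ → H) 0 = y := by rw [hA, hA0]; rfl
      rw [hDx0, hAy0, inner_neg_left, inner_neg_right] at h3
      have h5 := fact4 x y
      linear_combination -h3 - h5
    refine ContinuousLinearMap.ext fun x => ?_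
    exact ext_inner_right ℂ fun y => hmain x y

  intro j
  obtain ⟨n, rfl | rfl⟩ := j.eq_nat_or_neg
  · exact (hpos n).trans (hpos' n).symm
  · exact key n
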